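/- Let n ≥ 2, ζ = exp(2πi/n), and l ∈ {1,...,n-1}. Then the polynomial f(x) = (ζ^l/(n(ζ^l-1)))·(x-1)·(x^n-1)/(x-ζ^l) over ℂ satisfies f(1)=0, f'(1)=0, f(ζ^l)=1, and f(ζ^k)=0 for all k ∈ {0,...,n-1} with k ≠ l. -/

import Mathlib

open Polynomial

theorem stmt0 (n : ℕ) (hn : 2 ≤ n) (ζ : ℂ)
    (hζ : ζ = Complex.exp (2 * Real.pi * Complex.I / n))
    (l : ℕ) (hl1 : 1 ≤ l) (hln : l ≤ n - 1)
    (f : Polynomial ℂ)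
    (hf : f = C (ζ ^ l / (n * (ζ ^ l - 1))) * (X - 1) *
      ∏ i ∈ (Finset.range n).erase l, (X - C (ζ ^ i))) :
    f.eval 1 = 0 ∧ (Polynomial.derivative f).eval 1 = 0 ∧ f.eval (ζ ^ l) = 1 ∧
      ∀ k < n, k ≠ l → f.eval (ζ ^ k) = 0 := by
  have hn0 : (n : ℂ) ≠ 0 := Nat.cast_ne_zero.2 (by omega)
  have hprim : IsPrimitiveRoot ζ n := hζ ▸ Complex.isPrimitiveRoot_exp n (by omega)
  have hln' : l < n := by omega
  set Q : Polynomial ℂ := ∏ i ∈ (Finset.range n).erase l, (X - C (ζ ^ i)) with hQ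
  have hmem : (0 : ℕ) ∈ (Finset.range n).erase l :=
    Finset.mem_erase.2 ⟨by omega, Finset.mem_range.2 (by omega)⟩
  have hQ1 : Q.eval 1 = 0 := by
    rw [hQ, Polynomial.eval_prod]
    exact Finset.prod_eq_zero hmem (by simp)
  -- key product value
  have hprod : (X ^ n - 1 : Polynomial ℂ) = (X - C (ζ ^ l)) * Q := by
    have := X_pow_sub_C_eq_prod hprim (α := (1:ℂ)) (a := (1:ℂ)) (by omega) (one_pow n)
    simp only [map_one, mul_one] at this
    rw [this, hQ, ← Finset.mul_prod_erase _ _ (Finset.mem_range.2 hln')]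
  have hQl : Q.eval (ζ ^ l) = n * (ζ ^ l) ^ (n - 1) := by
    have h1 := congrArg (fun p => (Polynomial.derivative p).eval (ζ ^ l)) hprod
    simp only [derivative_mul, derivative_sub, derivative_X, derivative_C,
      derivative_X_pow, derivative_one, eval_add, eval_mul, eval_sub, eval_X, eval_C,
      eval_mul, eval_natCast, eval_pow, sub_zero, sub_self, zero_mul, add_zero,
      one_mul, mul_zero] at h1
    simpa using h1.symm
  have hζl1 : ζ ^ l - 1 ≠ 0 := sub_ne_zero.2 (hprim.pow_ne_one_of_pos_of_lt (by omega) hln')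
  have hζ0 : ζ ^ l ≠ 0 := by
    intro h
    have := hprim.pow_eq_one
    rw [show n = l + (n - l) by omega, pow_add, h, zero_mul] at this
    exact one_ne_zero this.symm
  refine ⟨by simp [hf], ?_, ?_, ?_⟩
  · rw [hf, mul_assoc, derivative_mul, eval_add, eval_mul, eval_mul, derivative_mul]
    simp [hQ1]
  · rw [hf]
    simp only [eval_mul, eval_sub, eval_X, eval_one, eval_C, hQl]
    have hpow : (ζ ^ l) ^ (n - 1) * ζ ^ l = 1 := by
      rw [← pow_succ, show n - 1 + 1 = n by omega, ← pow_mul, mul_comm, pow_mul,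
        hprim.pow_eq_one, one_pow]
    field_simp
    linear_combination hpow
  · intro k hk hkl
    rw [hf]
    simp only [eval_mul]
    have : Q.eval (ζ ^ k) = 0 := by
      rw [hQ, Polynomial.eval_prod]
      exact Finset.prod_eq_zero (Finset.mem_erase.2 ⟨hkl, Finset.mem_range.2 hk⟩) (by simp)
    simp [this]
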